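/- If (T,r) and (T',r') are rooted trees that satisfy the level-label condition, with common height h, then there exists a collection of bijective maps φ_i: T_i → T'_i for i = 0, 1, ..., h such that φ_{i+1}(parent_T(v)) = parent_{T'}(φ_i(v)) for all v ∈ T_i and all i = 0, 1, ..., h−1. -/

import Mathlib

attribute [local instance] Classical.propDecidable

namespace AHU

variable {V : Type*}

/-- The height of the rooted tree `(G, r)`: maximum distance from the root. -/
noncomputable def height (G : SimpleGraph V) [Fintype V] (r : V) : ℕ :=
  Finset.univ.sup fun v => G.dist r v

/-- The level of a vertex: height minus distance from the root. -/
noncomputable def lvl (G : SimpleGraph V) [Fintype V] (r : V) (v : V) : ℕ :=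
  height G r - G.dist r v

/-- `T_i`: the set of vertices at level `i`. -/
noncomputable def levelSet (G : SimpleGraph V) [Fintype V] (r : V) (i : ℕ) : Finset V :=
  Finset.univ.filter fun v => lvl G r v = i

/-- A vertex is a leaf if it has degree at most one. -/
def IsLeaf (G : SimpleGraph V) (v : V) : Prop :=
  {u | G.Adj v u}.ncard ≤ 1

/-- The parent of `v ≠ r`: the unique neighbour of `v` lying closer to the root
(on the unique path from `r` to `v`).  For `v = r` we return `v` itself. -/
noncomputable def parent (G : SimpleGraph V) (r v : V) : V :=
  if h : ∃ p, G.Adj p v ∧ G.dist r p + 1 = G.dist r v then h.choose else v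

/-- The set of children of `u`. -/
noncomputable def children (G : SimpleGraph V) [Fintype V] (r u : V) : Finset V :=
  Finset.univ.filter fun v => v ≠ r ∧ parent G r v = u

/-- The label-compression of a finite set `S` of tuples: the unique order isomorphism
from `(S, ≤lex)` onto `{0, …, |S| - 1}`, i.e. `s ↦ #{t ∈ S | t <lex s}`. -/
noncomputable def compress (S : Finset (List ℕ)) (s : List ℕ) : ℕ :=
  (S.filter fun t => List.Lex (· < ·) t s).card

/-- Auxiliary, level-indexed version of the compressed descendant labeling:
`labelAt G r i v` is the label of a vertex `v` of level `i`. -/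
noncomputable def labelAt (G : SimpleGraph V) [Fintype V] (r : V) : ℕ → V → List ℕ
  | 0, _ => []
  | (i + 1), v =>
      if IsLeaf G v then []
      else
        Multiset.sort
          ((children G r v).val.map fun u =>
            compress ((levelSet G r i).image (labelAt G r i)) (labelAt G r i u)) (· ≤ ·)

/-- The compressed descendant labeling `cdl : V(T) → ℕ*`. -/
noncomputable def cdl (G : SimpleGraph V) [Fintype V] (r : V) (v : V) : List ℕ :=
  labelAt G r (lvl G r v) v

/-- `𝓛(W)`: the multiset of compressed descendant labels of the vertices of `W`. -/
noncomputable def labels (G : SimpleGraph V) [Fintype V] (r : V) (W : Finset V) :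
    Multiset (List ℕ) :=
  W.val.map (cdl G r)

/-- The level-label condition: the multisets of labels agree on every level
`i = 0, 1, …, max(height T, height T')`. -/
noncomputable def LevelLabelCondition {V' : Type*} (G : SimpleGraph V) [Fintype V] (r : V)
    (G' : SimpleGraph V') [Fintype V'] (r' : V') : Prop :=
  ∀ i ≤ max (height G r) (height G' r' ),
    labels G r (levelSet G r i) = labels G' r' (levelSet G' r' i)


section Aux

-- auxiliary lemmas

lemma dist_le_of_mem_support {G : SimpleGraph V} {r x w : V} {p : G.Walk r x}
    (hw : w ∈ p.support) : G.dist r w ≤ p.length := by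
  classical
  calc G.dist r w ≤ (p.takeUntil w hw).length := SimpleGraph.dist_le _
    _ ≤ p.length := SimpleGraph.Walk.length_takeUntil_le _ _

lemma dist_lt_of_mem_support {G : SimpleGraph V} {r x w : V} {p : G.Walk r x}
    (hw : w ∈ p.support) (hne : w ≠ x) : G.dist r w < p.length := by
  classical
  have h1 : G.dist r w ≤ (p.takeUntil w hw).length := SimpleGraph.dist_le _
  have h2 : (p.takeUntil w hw).length + (p.dropUntil w hw).length = p.length := by
    rw [← SimpleGraph.Walk.length_append, SimpleGraph.Walk.take_spec]
  have h3 : (p.dropUntil w hw).length ≠ 0 := fun h0 =>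
    hne (SimpleGraph.Walk.eq_of_length_eq_zero h0)
  omega

lemma exists_closer {G : SimpleGraph V} {r v : V} (hc : G.Connected) (hvr : v ≠ r) :
    ∃ p, G.Adj p v ∧ G.dist r p + 1 = G.dist r v := by
  obtain ⟨q, hq⟩ := (hc v r).exists_walk_length_eq_dist
  have hd : G.dist v r = G.dist r v := SimpleGraph.dist_comm
  have hpos : G.dist r v ≠ 0 := by
    intro h0
    exact hvr (hc.dist_eq_zero_iff.mp h0).symm
  cases q with
  | nil => exact absurd rfl hvr
  | @cons _ b _ h q' =>
    refine ⟨b, h.symm, ?_⟩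
    have h1 : G.dist r b ≤ q'.length := by
      rw [SimpleGraph.dist_comm]; exact SimpleGraph.dist_le q'
    have h2 : G.dist r v ≤ G.dist r b + G.dist b v := hc.dist_triangle
    have h3 : G.dist b v = 1 := by
      rw [SimpleGraph.dist_comm, SimpleGraph.dist_eq_one_iff_adj]; exact h
    have h4 : q'.length + 1 = G.dist r v := by
      simpa [hd] using hq
    omega

lemma closer_unique {G : SimpleGraph V} {r v p q : V} (hT : G.IsTree)
    (hp : G.Adj p v ∧ G.dist r p + 1 = G.dist r v)
    (hq : G.Adj q v ∧ G.dist r q + 1 = G.dist r v) : p = q := by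
  classical
  obtain ⟨P, hPp, hPl⟩ := hT.isConnected.exists_path_of_dist r p
  obtain ⟨Q, hQp, hQl⟩ := hT.isConnected.exists_path_of_dist r q
  have hvP : v ∉ P.support := fun hmem => by
    have := dist_le_of_mem_support hmem
    omega
  have hvQ : v ∉ Q.support := fun hmem => by
    have := dist_le_of_mem_support hmem
    omega
  have hP1 : (P.concat hp.1).IsPath := by
    rw [SimpleGraph.Walk.isPath_def, SimpleGraph.Walk.support_concat]
    simp [List.concat_eq_append, (SimpleGraph.Walk.isPath_def _).mp hPp, hvP, List.nodup_append]
    exact fun a ha hav => hvP (hav ▸ ha)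
  have hQ1 : (Q.concat hq.1).IsPath := by
    rw [SimpleGraph.Walk.isPath_def, SimpleGraph.Walk.support_concat]
    simp [List.concat_eq_append, (SimpleGraph.Walk.isPath_def _).mp hQp, hvQ, List.nodup_append]
    exact fun a ha hav => hvQ (hav ▸ ha)
  have heq : P.concat hp.1 = Q.concat hq.1 := by
    have := hT.existsUnique_path r v
    exact (this.unique hP1 hQ1)
  have hsupp : P.support.concat v = Q.support.concat v := by
    rw [List.concat_eq_append, List.concat_eq_append,
      ← SimpleGraph.Walk.support_concat, ← SimpleGraph.Walk.support_concat, heq]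
    exact hp.1
  have hsupp2 : P.support = Q.support := by
    simpa [List.concat_eq_append] using hsupp
  have h1 : P.support.getLast (by simp) = p := SimpleGraph.Walk.getLast_support P
  have h2 : Q.support.getLast (by simp) = q := SimpleGraph.Walk.getLast_support Q
  rw [← h1, ← h2]
  congr 1

lemma adj_dist_ne {G : SimpleGraph V} (hT : G.IsTree) {r u w : V} (h : G.Adj u w) :
    G.dist r u ≠ G.dist r w := by
  classical
  intro hd
  obtain ⟨P, hPp, hPl⟩ := hT.isConnected.exists_path_of_dist r u
  obtain ⟨Q, hQp, hQl⟩ := hT.isConnected.exists_path_of_dist r w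
  have hwP : w ∉ P.support := fun hmem => by
    have := dist_lt_of_mem_support hmem h.ne'
    omega
  have hP1 : (P.concat h).IsPath := by
    rw [SimpleGraph.Walk.isPath_def, SimpleGraph.Walk.support_concat]
    simp [List.concat_eq_append, (SimpleGraph.Walk.isPath_def _).mp hPp, hwP, List.nodup_append]
    exact fun a ha haw => hwP (haw ▸ ha)
  have heq : P.concat h = Q := (hT.existsUnique_path r w).unique hP1 hQp
  have : (P.concat h).length = Q.length := by rw [heq]
  rw [SimpleGraph.Walk.length_concat] at this
  omega

section Levels

variable [Fintype V] {G : SimpleGraph V} {r : V}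

lemma dist_le_height (G : SimpleGraph V) (r v : V) : G.dist r v ≤ height G r :=
  Finset.le_sup (Finset.mem_univ v)

lemma mem_levelSet_iff {i : ℕ} (hi : i ≤ height G r) {v : V} :
    v ∈ levelSet G r i ↔ G.dist r v = height G r - i := by
  have hd := dist_le_height G r v
  rw [levelSet, Finset.mem_filter_univ]
  simp only [levelSet, Finset.mem_filter, Finset.mem_univ, true_and, lvl]
  omega

lemma levelSet_height_eq (hc : G.Connected) : levelSet G r (height G r) = {r} := by
  ext v
  rw [Finset.mem_singleton, mem_levelSet_iff le_rfl, Nat.sub_self]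
  constructor
  · intro h0; exact (hc.dist_eq_zero_iff.mp h0).symm
  · rintro rfl; exact SimpleGraph.dist_self

lemma parent_spec (hc : G.Connected) {v : V} (hvr : v ≠ r) :
    G.Adj (parent G r v) v ∧ G.dist r (parent G r v) + 1 = G.dist r v := by
  have h := exists_closer hc hvr
  rw [parent, dif_pos h]
  exact h.choose_spec

lemma parent_eq (hT : G.IsTree) {v p : V} (hvr : v ≠ r) (h : G.Adj p v)
    (hd : G.dist r p + 1 = G.dist r v) : parent G r v = p :=
  closer_unique hT (parent_spec hT.isConnected hvr) ⟨h, hd⟩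

lemma mem_children {u v : V} : v ∈ children G r u ↔ v ≠ r ∧ parent G r v = u := by
  simp [children]

lemma level_structure (hT : G.IsTree) {i : ℕ} (hi : i < height G r) {v : V}
    (hv : v ∈ levelSet G r i) :
    v ≠ r ∧ parent G r v ∈ levelSet G r (i + 1) ∧ v ∈ children G r (parent G r v) := by
  have hd := (mem_levelSet_iff (le_of_lt hi)).mp hv
  have hvr : v ≠ r := by
    rintro rfl
    rw [SimpleGraph.dist_self] at hd
    omega
  have hs := parent_spec hT.isConnected hvr
  refine ⟨hvr, ?_, mem_children.mpr ⟨hvr, rfl⟩⟩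
  rw [mem_levelSet_iff hi]
  omega

lemma children_subset_levelSet (hT : G.IsTree) {i : ℕ} (hi : i + 1 ≤ height G r) {u : V}
    (hu : u ∈ levelSet G r (i + 1)) : children G r u ⊆ levelSet G r i := by
  intro v hv
  obtain ⟨hvr, hpv⟩ := mem_children.mp hv
  have hs := parent_spec hT.isConnected hvr
  rw [hpv] at hs
  have hd := (mem_levelSet_iff hi).mp hu
  rw [mem_levelSet_iff (by omega)]
  omega

lemma children_root (hT : G.IsTree) (h1 : 1 ≤ height G r) :
    children G r r = levelSet G r (height G r - 1) := by
  ext v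
  rw [mem_children, mem_levelSet_iff (by omega)]
  have hsub : height G r - (height G r - 1) = 1 := by omega
  rw [hsub]
  constructor
  · rintro ⟨hvr, hpv⟩
    have hs := parent_spec hT.isConnected hvr
    rw [hpv] at hs
    rw [SimpleGraph.dist_self] at hs
    omega
  · intro hd
    have hvr : v ≠ r := by
      rintro rfl
      rw [SimpleGraph.dist_self] at hd
      omega
    refine ⟨hvr, parent_eq hT hvr ?_ ?_⟩
    · exact SimpleGraph.dist_eq_one_iff_adj.mp hd
    · rw [SimpleGraph.dist_self]; omega

lemma children_eq_empty (hT : G.IsTree) {u : V} (hur : u ≠ r) (hleaf : IsLeaf G u) :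
    children G r u = ∅ := by
  by_contra hne
  obtain ⟨v, hv⟩ := Finset.nonempty_of_ne_empty hne
  obtain ⟨hvr, hpv⟩ := mem_children.mp hv
  have hsv := parent_spec hT.isConnected hvr
  rw [hpv] at hsv
  have hsu := parent_spec hT.isConnected hur
  have hvmem : v ∈ {w | G.Adj u w} := hsv.1
  have hpmem : parent G r u ∈ {w | G.Adj u w} := hsu.1.symm
  have hvp : v ≠ parent G r u := by
    intro heq
    rw [heq] at hsv
    omega
  have := (Set.ncard_le_one (Set.toFinite _)).mp hleaf _ hvmem _ hpmem
  exact hvp this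

lemma children_nonempty (hT : G.IsTree) {u : V} (hur : u ≠ r) (hnl : ¬ IsLeaf G u) :
    (children G r u).Nonempty := by
  rw [IsLeaf, not_le] at hnl
  obtain ⟨a, ha, b, hb, hab⟩ := (Set.one_lt_ncard (Set.toFinite _)).mp hnl
  have hsu := parent_spec hT.isConnected hur
  obtain ⟨w, hw, hwp⟩ : ∃ w, G.Adj u w ∧ w ≠ parent G r u := by
    by_cases hap : a = parent G r u
    · exact ⟨b, hb, fun hbp => hab (hap.trans hbp.symm)⟩
    · exact ⟨a, ha, hap⟩
  have hdne : G.dist r u ≠ G.dist r w := adj_dist_ne hT hw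
  have hdw1 : G.dist r w ≤ G.dist r u + 1 := by
    have := hT.isConnected.dist_triangle (u := r) (v := u) (w := w)
    have h1 : G.dist u w = 1 := SimpleGraph.dist_eq_one_iff_adj.mpr hw
    omega
  have hdu1 : G.dist r u ≤ G.dist r w + 1 := by
    have := hT.isConnected.dist_triangle (u := r) (v := w) (w := u)
    have h1 : G.dist w u = 1 := SimpleGraph.dist_eq_one_iff_adj.mpr hw.symm
    omega
  have hdeq : G.dist r w = G.dist r u + 1 := by
    rcases lt_or_gt_of_ne hdne with hlt | hgt
    · omega
    · exfalso
      have heq : G.dist r w + 1 = G.dist r u := by omega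
      exact hwp (closer_unique hT ⟨hw.symm, heq⟩ hsu)
  have hwr : w ≠ r := by
    rintro rfl
    rw [SimpleGraph.dist_self] at hdeq
    omega
  exact ⟨w, mem_children.mpr ⟨hwr, parent_eq hT hwr hw (by omega)⟩⟩

lemma lvl_eq_of_mem {i : ℕ} {v : V} (hv : v ∈ levelSet G r i) : lvl G r v = i :=
  (Finset.mem_filter.mp hv).2

lemma cdl_eq_labelAt {i : ℕ} {v : V} (hv : v ∈ levelSet G r i) :
    cdl G r v = labelAt G r i v := by rw [cdl, lvl_eq_of_mem hv]

end Levels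

section Compress

lemma compress_lt {S : Finset (List ℕ)} {s t : List ℕ} (hs : s ∈ S)
    (h : List.Lex (· < ·) s t) : compress S s < compress S t := by
  classical
  apply Finset.card_lt_card
  rw [Finset.ssubset_iff_of_subset]
  · refine ⟨s, ?_, ?_⟩
    · simp only [Finset.mem_filter]
      exact ⟨hs, h⟩
    · simp only [Finset.mem_filter, not_and]
      intro _
      exact irrefl_of (List.Lex (· < ·)) s
  · intro x hx
    simp only [Finset.mem_filter] at hx ⊢
    exact ⟨hx.1, List.lt_trans hx.2 h⟩

lemma compress_injOn {S : Finset (List ℕ)} : Set.InjOn (compress S) ↑S := by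
  intro s hs t ht h
  rcases @trichotomous _ (List.Lex (· < ·)) inferInstance s t with hlt | heq | hgt
  · exact absurd h (ne_of_lt (compress_lt hs hlt))
  · exact heq
  · exact absurd h.symm (ne_of_lt (compress_lt ht hgt))

lemma multiset_map_cancel {α β : Type*} {f : α → β} {S : Set α} (hf : Set.InjOn f S) :
    ∀ (s : Multiset α), (∀ x ∈ s, x ∈ S) → ∀ (t : Multiset α), (∀ x ∈ t, x ∈ S) →
      s.map f = t.map f → s = t := by
  intro s
  induction s using Multiset.induction with
  | empty =>
    intro _ t _ h
    simp only [Multiset.map_zero] at h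
    exact (Multiset.map_eq_zero.mp h.symm).symm
  | cons a s ih =>
    intro hs t ht h
    have hfa : f a ∈ t.map f := by
      rw [← h, Multiset.map_cons]
      exact Multiset.mem_cons_self _ _
    obtain ⟨b, hbt, hba⟩ := Multiset.mem_map.mp hfa
    have hab : a = b := hf (hs a (Multiset.mem_cons_self _ _)) (ht b hbt) hba.symm
    subst hab
    have ht' : t = a ::ₘ t.erase a := (Multiset.cons_erase hbt).symm
    rw [ht']
    congr 1
    apply ih (fun x hx => hs x (Multiset.mem_cons_of_mem hx)) _
      (fun x hx => ht x (Multiset.mem_of_mem_erase hx))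
    have h2 : f a ::ₘ s.map f = f a ::ₘ (t.erase a).map f := by
      rw [← Multiset.map_cons, ← Multiset.map_cons, ← ht', h]
    exact (Multiset.cons_inj_right _).mp h2

lemma exists_bijOn_of_map_eq {α β : Type*} [Nonempty β] {f : α → List ℕ} {g : β → List ℕ} :
    ∀ (n : ℕ) (s : Finset α) (t : Finset β), s.card = n → s.val.map f = t.val.map g →
      ∃ e : α → β, Set.BijOn e ↑s ↑t ∧ ∀ x ∈ s, g (e x) = f x := by
  intro n
  induction n with
  | zero =>
    intro s t hcard h
    rw [Finset.card_eq_zero.mp hcard] at h ⊢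
    simp only [Finset.empty_val, Multiset.map_zero] at h
    have : t = ∅ := Finset.val_eq_zero.mp (Multiset.map_eq_zero.mp h.symm)
    subst this
    exact ⟨fun _ => Classical.arbitrary β, by simp [Set.bijOn_empty], by simp⟩
  | succ n ih =>
    intro s t hcard h
    have hpos : 0 < s.card := by omega
    obtain ⟨a, ha⟩ := Finset.card_pos.mp hpos
    have hfa : f a ∈ t.val.map g := by
      rw [← h]
      exact Multiset.mem_map_of_mem _ ha
    obtain ⟨b, hbt, hba⟩ := Multiset.mem_map.mp hfa
    have hbt' : b ∈ t := hbt
    have hs' : s.val = a ::ₘ (s.erase a).val := by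
      rw [Finset.erase_val]
      exact (Multiset.cons_erase ha).symm
    have ht' : t.val = b ::ₘ (t.erase b).val := by
      rw [Finset.erase_val]
      exact (Multiset.cons_erase hbt).symm
    have hmap : (s.erase a).val.map f = (t.erase b).val.map g := by
      have h2 : f a ::ₘ (s.erase a).val.map f = g b ::ₘ (t.erase b).val.map g := by
        rw [← Multiset.map_cons, ← Multiset.map_cons, ← hs', ← ht', h]
      rw [hba] at h2
      exact (Multiset.cons_inj_right _).mp h2
    obtain ⟨e', he'b, he'l⟩ := ih (s.erase a) (t.erase b)
      (by rw [Finset.card_erase_of_mem ha]; omega) hmap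
    classical
    refine ⟨fun x => if x = a then b else e' x, ⟨?_, ?_, ?_⟩, ?_⟩
    · intro x hx
      by_cases hxa : x = a
      · simp only [hxa, if_pos rfl]
        exact hbt'
      · simp only [if_neg hxa]
        have : x ∈ s.erase a := Finset.mem_erase.mpr ⟨hxa, hx⟩
        exact Finset.mem_coe.mp (Finset.mem_of_mem_erase (Finset.mem_coe.mpr (he'b.1 this)))
    · intro x hx y hy hxy
      beta_reduce at hxy
      by_cases hxa : x = a <;> by_cases hya : y = a
      · rw [hxa, hya]
      · exfalso
        rw [if_pos hxa, if_neg hya] at hxy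
        have hy' : y ∈ s.erase a := Finset.mem_erase.mpr ⟨hya, hy⟩
        have : e' y ∈ t.erase b := he'b.1 hy'
        rw [← hxy] at this
        exact (Finset.mem_erase.mp this).1 rfl
      · exfalso
        rw [if_neg hxa, if_pos hya] at hxy
        have hx' : x ∈ s.erase a := Finset.mem_erase.mpr ⟨hxa, hx⟩
        have : e' x ∈ t.erase b := he'b.1 hx'
        rw [hxy] at this
        exact (Finset.mem_erase.mp this).1 rfl
      · rw [if_neg hxa, if_neg hya] at hxy
        exact he'b.2.1 (Finset.mem_coe.mpr (Finset.mem_erase.mpr ⟨hxa, hx⟩))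
          (Finset.mem_coe.mpr (Finset.mem_erase.mpr ⟨hya, hy⟩)) hxy
    · intro y hy
      by_cases hyb : y = b
      · exact ⟨a, ha, by simp [hyb]⟩
      · have hy' : y ∈ t.erase b := Finset.mem_erase.mpr ⟨hyb, hy⟩
        obtain ⟨x, hx, hxe⟩ := he'b.2.2 hy'
        have hxa : x ≠ a := (Finset.mem_erase.mp hx).1
        exact ⟨x, Finset.mem_coe.mpr (Finset.mem_of_mem_erase (Finset.mem_coe.mp hx)),
          by simp [if_neg hxa, hxe]⟩
    · intro x hx
      by_cases hxa : x = a
      · beta_reduce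
        rw [if_pos hxa, hba, hxa]
      · beta_reduce
        rw [if_neg hxa]
        exact he'l x (Finset.mem_erase.mpr ⟨hxa, hx⟩)

end Compress

section Labels

variable [Fintype V] {G : SimpleGraph V} {r : V}

lemma cdl_leaf {i : ℕ} {u : V} (hu : u ∈ levelSet G r (i + 1)) (hleaf : IsLeaf G u) :
    cdl G r u = [] := by
  rw [cdl_eq_labelAt hu, labelAt, if_pos hleaf]

lemma cdl_ne_nil (hT : G.IsTree) {i : ℕ} {u : V} (hu : u ∈ levelSet G r (i + 1))
    (hur : u ≠ r) (hnl : ¬ IsLeaf G u) : cdl G r u ≠ [] := by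
  rw [cdl_eq_labelAt hu, labelAt, if_neg hnl]
  intro hnil
  have h1 : (Multiset.sort ((children G r u).val.map fun w =>
      compress ((levelSet G r i).image (labelAt G r i)) (labelAt G r i w)) (· ≤ ·)).length = 0 := by
    rw [hnil]; rfl
  rw [Multiset.length_sort, Multiset.card_map] at h1
  obtain ⟨w, hw⟩ := children_nonempty hT hur hnl
  have : w ∈ (children G r u).val := hw
  have := Multiset.card_pos_iff_exists_mem.mpr ⟨w, this⟩
  omega

lemma cdl_not_leaf {i : ℕ} {u : V} (hu : u ∈ levelSet G r (i + 1)) (hnl : ¬ IsLeaf G u) :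
    cdl G r u = Multiset.sort ((children G r u).val.map fun w =>
      compress ((levelSet G r i).image (labelAt G r i)) (labelAt G r i w)) (· ≤ ·) := by
  rw [cdl_eq_labelAt hu, labelAt, if_neg hnl]

lemma children_val_map_cdl (hT : G.IsTree) {i : ℕ} (hi : i + 1 ≤ height G r) {u : V}
    (hu : u ∈ levelSet G r (i + 1)) :
    ((children G r u).val.map fun w =>
        compress ((levelSet G r i).image (labelAt G r i)) (labelAt G r i w)) =
      Multiset.map (compress ((levelSet G r i).image (labelAt G r i)))
        ((children G r u).val.map (cdl G r)) := by
  rw [Multiset.map_map]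
  apply Multiset.map_congr rfl
  intro w hw
  have hwl : w ∈ levelSet G r i := children_subset_levelSet hT hi hu hw
  simp only [Function.comp_apply, cdl_eq_labelAt hwl]

lemma mem_labelSet_of_children (hT : G.IsTree) {i : ℕ} (hi : i + 1 ≤ height G r) {u : V}
    (hu : u ∈ levelSet G r (i + 1)) {x : List ℕ}
    (hx : x ∈ (children G r u).val.map (cdl G r)) :
    x ∈ ((levelSet G r i).image (labelAt G r i) : Finset (List ℕ)) := by
  obtain ⟨w, hw, rfl⟩ := Multiset.mem_map.mp hx
  have hwl : w ∈ levelSet G r i := children_subset_levelSet hT hi hu hw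
  rw [cdl_eq_labelAt hwl]
  exact Finset.mem_image_of_mem _ hwl

end Labels

section TwoGraphs

variable {V V' : Type*} [Fintype V] [Fintype V'] {G : SimpleGraph V} {r : V}
  {G' : SimpleGraph V'} {r' : V'}

lemma labelSet_subset_aux {i : ℕ}
    (h : labels G r (levelSet G r i) = labels G' r' (levelSet G' r' i)) :
    (levelSet G r i).image (labelAt G r i) ⊆ (levelSet G' r' i).image (labelAt G' r' i) := by
  intro x hx
  obtain ⟨v, hv, rfl⟩ := Finset.mem_image.mp hx
  have h1 : labelAt G r i v ∈ labels G r (levelSet G r i) := by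
    rw [labels, ← cdl_eq_labelAt hv]
    exact Multiset.mem_map_of_mem _ hv
  rw [h] at h1
  obtain ⟨w, hw, hwx⟩ := Multiset.mem_map.mp h1
  have hw' : w ∈ levelSet G' r' i := hw
  rw [Finset.mem_image]
  exact ⟨w, hw', by rw [← cdl_eq_labelAt hw', hwx]⟩

lemma labelSet_eq_of_labels_eq {i : ℕ}
    (h : labels G r (levelSet G r i) = labels G' r' (levelSet G' r' i)) :
    (levelSet G r i).image (labelAt G r i) = (levelSet G' r' i).image (labelAt G' r' i) :=
  Finset.Subset.antisymm (labelSet_subset_aux h) (labelSet_subset_aux h.symm)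

lemma children_map_cdl_eq (hT : G.IsTree) (hT' : G'.IsTree) {i : ℕ}
    (hi : i + 1 ≤ height G r) (hi' : i + 1 ≤ height G' r')
    (hS : (levelSet G r i).image (labelAt G r i) = (levelSet G' r' i).image (labelAt G' r' i))
    {u : V} {u' : V'} (hu : u ∈ levelSet G r (i + 1)) (hu' : u' ∈ levelSet G' r' (i + 1))
    (hur : u ≠ r) (hur' : u' ≠ r')
    (hcdl : cdl G r u = cdl G' r' u') :
    (children G r u).val.map (cdl G r) = (children G' r' u').val.map (cdl G' r') := by
  by_cases hleaf : IsLeaf G u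
  · have hc : cdl G r u = [] := cdl_leaf hu hleaf
    have hleaf' : IsLeaf G' u' := by
      by_contra hnl'
      exact cdl_ne_nil hT' hu' hur' hnl' (by rw [← hcdl, hc])
    rw [children_eq_empty hT hur hleaf, children_eq_empty hT' hur' hleaf']
    simp
  · have hnl' : ¬ IsLeaf G' u' := by
      intro hleaf'
      exact cdl_ne_nil hT hu hur hleaf (by rw [hcdl, cdl_leaf hu' hleaf'])
    have h1 := cdl_not_leaf hu hleaf
    have h2 := cdl_not_leaf hu' hnl'
    rw [h1, h2] at hcdl
    have hM : ((children G r u).val.map fun w =>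
        compress ((levelSet G r i).image (labelAt G r i)) (labelAt G r i w)) =
        ((children G' r' u').val.map fun w =>
          compress ((levelSet G' r' i).image (labelAt G' r' i)) (labelAt G' r' i w)) := by
      have := congrArg (fun l : List ℕ => (l : Multiset ℕ)) hcdl
      simpa only [Multiset.sort_eq] using this
    rw [children_val_map_cdl hT hi hu, children_val_map_cdl hT' hi' hu', ← hS] at hM
    exact multiset_map_cancel (S := ((levelSet G r i).image (labelAt G r i) : Set (List ℕ)))
      compress_injOn _ (fun x hx => mem_labelSet_of_children hT hi hu hx) _
      (fun x hx => by
        rw [hS]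
        exact mem_labelSet_of_children hT' hi' hu' hx) hM

end TwoGraphs

end Aux

/-- **Lemma 1.** If `(T, r)` and `(T', r')` are rooted trees that satisfy the level-label
condition, with common height `h`, then there exists a collection of bijective maps
`φ_i : T_i → T'_i` for `i ∈ [h]` such that `φ_{i+1}(parent_T v) = parent_{T'}(φ_i v)`
for all `v ∈ T_i` and all `i ∈ [h-1]`. -/
theorem exists_levelwise_bijections {V V' : Type*} [Fintype V] [Fintype V']
    (G : SimpleGraph V) (r : V) (G' : SimpleGraph V') (r' : V')
    (hT : G.IsTree) (hT' : G'.IsTree) (h : ℕ)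
    (hh : height G r = h) (hh' : height G' r' = h)
    (hLL : LevelLabelCondition G r G' r') :
    ∃ φ : ℕ → V → V',
      (∀ i ≤ h, Set.BijOn (φ i) (levelSet G r i) (levelSet G' r' i)) ∧
      (∀ i < h, ∀ v ∈ levelSet G r i, φ (i + 1) (parent G r v) = parent G' r' (φ i v)) := by
  classical
  have hcon := hT.isConnected
  have hcon' := hT'.isConnected
  have hV' : Nonempty V' := hcon'.nonempty
  have key : ∀ n : ℕ, ∃ φ : ℕ → V → V',
      (∀ i, h - n ≤ i → i ≤ h →
        Set.BijOn (φ i) ↑(levelSet G r i) ↑(levelSet G' r' i) ∧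
        ∀ v ∈ levelSet G r i, cdl G' r' (φ i v) = cdl G r v) ∧
      (∀ i, h - n ≤ i → i < h → ∀ v ∈ levelSet G r i,
        φ (i + 1) (parent G r v) = parent G' r' (φ i v)) := by
    intro n
    induction n with
    | zero =>
      refine ⟨fun _ _ => r', fun i hi1 hi2 => ?_, fun i hi1 hi2 v hv => by omega⟩
      have hieq : i = h := by omega
      subst hieq
      have e1 : levelSet G r i = {r} := by rw [← hh]; exact levelSet_height_eq hcon
      have e1' : levelSet G' r' i = {r'} := by rw [← hh']; exact levelSet_height_eq hcon'
      have hcdl : cdl G' r' r' = cdl G r r := by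
        have hl := hLL i (by omega)
        rw [labels, labels, e1, e1'] at hl
        simp only [Finset.singleton_val, Multiset.map_singleton] at hl
        exact (Multiset.singleton_inj.mp hl).symm
      refine ⟨⟨?_, ?_, ?_⟩, ?_⟩
      · intro x hx
        rw [e1']
        simp
      · intro x hx y hy _
        rw [e1] at hx hy
        simp only [Finset.coe_singleton, Set.mem_singleton_iff] at hx hy
        rw [hx, hy]
      · intro y hy
        rw [e1'] at hy
        simp only [Finset.coe_singleton, Set.mem_singleton_iff] at hy
        refine ⟨r, ?_, hy.symm⟩
        rw [e1]
        simp
      · intro v hv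
        rw [e1, Finset.mem_singleton] at hv
        rw [hv]
        exact hcdl
    | succ n ih =>
      obtain ⟨φ, H1, H2⟩ := ih
      by_cases hn : h ≤ n
      · exact ⟨φ, fun i hi1 hi2 => H1 i (by omega) hi2,
          fun i hi1 hi2 v hv => H2 i (by omega) hi2 v hv⟩
      set i₀ : ℕ := h - n - 1 with hi₀
      have hi₀1 : i₀ + 1 = h - n := by omega
      have hi₀h : i₀ + 1 ≤ h := by omega
      obtain ⟨Hb, Hl⟩ := H1 (i₀ + 1) (by omega) (by omega)
      have hmatch : ∀ u ∈ levelSet G r (i₀ + 1),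
          (children G r u).val.map (cdl G r) =
          (children G' r' (φ (i₀ + 1) u)).val.map (cdl G' r') := by
        intro u hu
        have hu' : φ (i₀ + 1) u ∈ levelSet G' r' (i₀ + 1) :=
          Finset.mem_coe.mp (Hb.1 (Finset.mem_coe.mpr hu))
        by_cases hroot : i₀ + 1 = h
        · have e1 : levelSet G r (i₀ + 1) = {r} := by
            rw [hroot, ← hh]; exact levelSet_height_eq hcon
          have e1' : levelSet G' r' (i₀ + 1) = {r'} := by
            rw [hroot, ← hh']; exact levelSet_height_eq hcon'
          have hur : u = r := by rw [e1, Finset.mem_singleton] at hu; exact hu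
          have hur' : φ (i₀ + 1) u = r' := by
            rw [e1', Finset.mem_singleton] at hu'; exact hu'
          rw [hur', hur, children_root hT (by omega), children_root hT' (by omega)]
          have d1 : height G r - 1 = i₀ := by omega
          have d1' : height G' r' - 1 = i₀ := by omega
          rw [d1, d1']
          have hl := hLL i₀ (by omega)
          rw [labels, labels] at hl
          exact hl
        · have hur : u ≠ r := by
            rintro rfl
            have := (mem_levelSet_iff (by omega)).mp hu
            rw [SimpleGraph.dist_self] at this
            omega
          have hur' : φ (i₀ + 1) u ≠ r' := by
            rintro heq
            have := (mem_levelSet_iff (by omega)).mp hu'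
            rw [heq, SimpleGraph.dist_self] at this
            omega
          exact children_map_cdl_eq hT hT' (by omega) (by omega)
            (labelSet_eq_of_labels_eq (hLL i₀ (by omega))) hu hu' hur hur' (Hl u hu).symm
      have hEx : ∀ u : V, ∃ e : V → V', u ∈ levelSet G r (i₀ + 1) →
          Set.BijOn e ↑(children G r u) ↑(children G' r' (φ (i₀ + 1) u)) ∧
          ∀ x ∈ children G r u, cdl G' r' (e x) = cdl G r x := by
        intro u
        by_cases hu : u ∈ levelSet G r (i₀ + 1)
        · obtain ⟨e, he1, he2⟩ := exists_bijOn_of_map_eq (children G r u).card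
            (children G r u) (children G' r' (φ (i₀ + 1) u)) rfl (hmatch u hu)
          exact ⟨e, fun _ => ⟨he1, he2⟩⟩
        · exact ⟨fun _ => Classical.arbitrary V', fun hmem => absurd hmem hu⟩
      choose E hE using hEx
      set ψ : V → V' := fun v => E (parent G r v) v with hψ
      have hstruct : ∀ v ∈ levelSet G r i₀, v ≠ r ∧
          parent G r v ∈ levelSet G r (i₀ + 1) ∧ v ∈ children G r (parent G r v) :=
        fun v hv => level_structure hT (by omega) hv
      have hψmem : ∀ v ∈ levelSet G r i₀,
          ψ v ∈ children G' r' (φ (i₀ + 1) (parent G r v)) := by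
        intro v hv
        obtain ⟨hvr, hp, hc⟩ := hstruct v hv
        exact Finset.mem_coe.mp ((hE (parent G r v) hp).1.1 (Finset.mem_coe.mpr hc))
      have hψlbl : ∀ v ∈ levelSet G r i₀, cdl G' r' (ψ v) = cdl G r v := by
        intro v hv
        obtain ⟨hvr, hp, hc⟩ := hstruct v hv
        exact (hE (parent G r v) hp).2 v hc
      have hψpar : ∀ v ∈ levelSet G r i₀,
          parent G' r' (ψ v) = φ (i₀ + 1) (parent G r v) := by
        intro v hv
        exact (mem_children.mp (hψmem v hv)).2
      have hψlvl : ∀ v ∈ levelSet G r i₀, ψ v ∈ levelSet G' r' i₀ := by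
        intro v hv
        obtain ⟨hvr, hp, hc⟩ := hstruct v hv
        have hp' : φ (i₀ + 1) (parent G r v) ∈ levelSet G' r' (i₀ + 1) :=
          Finset.mem_coe.mp (Hb.1 (Finset.mem_coe.mpr hp))
        exact children_subset_levelSet hT' (by omega) hp' (hψmem v hv)
      have hψbij : Set.BijOn ψ ↑(levelSet G r i₀) ↑(levelSet G' r' i₀) := by
        refine ⟨fun v hv => Finset.mem_coe.mpr (hψlvl v (Finset.mem_coe.mp hv)), ?_, ?_⟩
        · intro v hv w hw hvw
          have hv' := Finset.mem_coe.mp hv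
          have hw' := Finset.mem_coe.mp hw
          obtain ⟨hvr, hpv, hcv⟩ := hstruct v hv'
          obtain ⟨hwr, hpw, hcw⟩ := hstruct w hw'
          have hpeq : φ (i₀ + 1) (parent G r v) = φ (i₀ + 1) (parent G r w) := by
            rw [← hψpar v hv', ← hψpar w hw', hvw]
          have hpp : parent G r v = parent G r w :=
            Hb.2.1 (Finset.mem_coe.mpr hpv) (Finset.mem_coe.mpr hpw) hpeq
          have := (hE (parent G r v) hpv).1.2.1 (Finset.mem_coe.mpr hcv)
            (Finset.mem_coe.mpr (hpp ▸ hcw)) (by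
              show E (parent G r v) v = E (parent G r v) w
              calc E (parent G r v) v = ψ v := rfl
                _ = ψ w := hvw
                _ = E (parent G r w) w := rfl
                _ = E (parent G r v) w := by rw [hpp])
          exact this
        · intro y hy
          have hy' := Finset.mem_coe.mp hy
          obtain ⟨hyr, hpy, hcy⟩ := level_structure hT' (by omega) hy'
          obtain ⟨u, hu, hueq⟩ := Hb.2.2 (Finset.mem_coe.mpr hpy)
          have hu' := Finset.mem_coe.mp hu
          have hcy' : y ∈ children G' r' (φ (i₀ + 1) u) := by rw [hueq]; exact hcy
          obtain ⟨x, hx, hxe⟩ := (hE u hu').1.2.2 (Finset.mem_coe.mpr hcy')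
          have hx' := Finset.mem_coe.mp hx
          have hxu : parent G r x = u := (mem_children.mp hx').2
          have hxl : x ∈ levelSet G r i₀ := children_subset_levelSet hT (by omega) hu' hx'
          refine ⟨x, Finset.mem_coe.mpr hxl, ?_⟩
          show E (parent G r x) x = y
          rw [hxu]
          exact hxe
      refine ⟨fun j => if j = i₀ then ψ else φ j, ?_, ?_⟩
      · intro i hi1 hi2
        by_cases hii : i = i₀
        · subst hii
          simp only [if_pos rfl]
          exact ⟨hψbij, hψlbl⟩
        · simp only [if_neg hii]
          exact H1 i (by omega) hi2
      · intro i hi1 hi2 v hv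
        by_cases hii : i = i₀
        · subst hii
          have hne : i₀ + 1 ≠ i₀ := by omega
          simp only [if_pos rfl, if_neg hne]
          exact (hψpar v hv).symm
        · have hne1 : i ≠ i₀ := hii
          have hne2 : i + 1 ≠ i₀ := by omega
          simp only [if_neg hne1, if_neg hne2]
          exact H2 i (by omega) hi2 v hv
  obtain ⟨φ, h1, h2⟩ := key h
  exact ⟨φ, fun i hi => (h1 i (by omega) hi).1, fun i hi v hv => h2 i (by omega) hi v hv⟩


end AHU
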